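/- Let σ > 0, let X be an integrable real random variable and Y an ℝ^d-valued random variable on the same probability space. Assume that for every continuously differentiable function f : ℝ × ℝ^d → ℝ such that f and ∂_x f are bounded one has E[σ² · ∂_x f(X,Y) − X · f(X,Y)] = 0. Then X has law N(0,σ²) and X is independent of Y. -/

import Mathlib

open MeasureTheory ProbabilityTheory

open Set Filter Real
open scoped Topology

section SteinSolution

variable {σ : ℝ} (hσ : 0 < σ)

/-- unnormalized gaussian density -/
noncomputable def ρ (σ : ℝ) (t : ℝ) : ℝ := Real.exp (-(2 * σ ^ 2)⁻¹ * t ^ 2)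

lemma rho_pos (σ t : ℝ) : 0 < ρ σ t := Real.exp_pos _

lemma rho_cont (σ : ℝ) : Continuous (ρ σ) := by
  unfold ρ; fun_prop

include hσ

lemma b_pos : 0 < (2 * σ ^ 2)⁻¹ := by positivity

lemma rho_integrable : Integrable (ρ σ) := integrable_exp_neg_mul_sq (b_pos hσ)

lemma rho_mul_integrable {g : ℝ → ℝ} (hg : Continuous g) {C : ℝ} (hgb : ∀ x, |g x| ≤ C) :
    Integrable (fun t => g t * ρ σ t) := by
  refine (rho_integrable hσ).bdd_mul hg.aestronglyMeasurable (c := C) (Filter.Eventually.of_forall fun x => ?_)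
  simpa [Real.norm_eq_abs] using hgb x

/-- Mill's ratio-type tail bound: for `x > 0`, `∫_{Ioi x} ρ ≤ (σ²/x) ρ x`. -/
lemma rho_tail (x : ℝ) (hx : 0 < x) :
    ∫ t in Ioi x, ρ σ t ≤ σ ^ 2 / x * ρ σ x := by
  have hmul : Integrable (fun t : ℝ => t * ρ σ t) := integrable_mul_exp_neg_mul_sq (b_pos hσ)
  have hFTC : ∫ t in Ioi x, t * ρ σ t = σ ^ 2 * ρ σ x := by
    have hderiv : ∀ t ∈ Ici x, HasDerivAt (fun t => -(σ ^ 2) * ρ σ t) (t * ρ σ t) t := by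
      intro t _
      have h1 : HasDerivAt (fun t : ℝ => -(2 * σ ^ 2)⁻¹ * t ^ 2) (-(2 * σ ^ 2)⁻¹ * (2 * t)) t := by
        have := (hasDerivAt_pow 2 t).const_mul (-(2 * σ ^ 2)⁻¹)
        convert this using 1
        · rfl
        · rfl
        · norm_num
      have h2 := (h1.exp).const_mul (-(σ ^ 2))
      convert h2 using 1
      · rfl
      · rfl
      · rfl
      unfold ρ
      field_simp
    have htend : Tendsto (fun t => -(σ ^ 2) * ρ σ t) atTop (𝓝 0) := by
      rw [show (0 : ℝ) = -(σ ^ 2) * 0 by ring]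
      refine Tendsto.const_mul _ ?_
      have h3 : Tendsto (fun t : ℝ => -(2 * σ ^ 2)⁻¹ * t ^ 2) atTop atBot :=
        Tendsto.const_mul_atTop_of_neg (by simpa using neg_neg_iff_pos.2 (b_pos hσ))
          (tendsto_pow_atTop (by norm_num))
      have h4 := (Real.tendsto_exp_atBot).comp h3
      exact h4
    have := integral_Ioi_of_hasDerivAt_of_tendsto (f := fun t => -(σ ^ 2) * ρ σ t)
      (f' := fun t => t * ρ σ t) (a := x) (m := 0)
      (((continuous_const.mul (rho_cont σ)).continuousAt).continuousWithinAt)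
      (fun t ht => hderiv t (Set.mem_Ici.2 (le_of_lt (Set.mem_Ioi.1 ht)))) hmul.integrableOn htend
    rw [this]; ring
  calc ∫ t in Ioi x, ρ σ t ≤ ∫ t in Ioi x, (t / x) * ρ σ t := by
        refine setIntegral_mono_on ((rho_integrable hσ).integrableOn)
          ((hmul.div_const x).integrableOn.congr_fun ?_ measurableSet_Ioi) measurableSet_Ioi ?_
        · intro t ht; field_simp
        · intro t ht
          have h1 : (1 : ℝ) ≤ t / x := (one_le_div hx).2 (le_of_lt ht)
          nth_rewrite 1 [show ρ σ t = 1 * ρ σ t by ring]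
          exact mul_le_mul_of_nonneg_right h1 (rho_pos σ t).le
    _ = σ ^ 2 / x * ρ σ x := by
        rw [show (fun t => (t / x) * ρ σ t) = (fun t => (t * ρ σ t) / x) by
          funext t; ring]
        rw [integral_div, hFTC]; ring

end SteinSolution

section SteinF

variable {σ : ℝ} (hσ : 0 < σ)

/-- primitive of `g·ρ` -/
noncomputable def SI (σ : ℝ) (g : ℝ → ℝ) (x : ℝ) : ℝ := ∫ t in Iic x, g t * ρ σ t

/-- The Stein solution. -/
noncomputable def SF (σ : ℝ) (g : ℝ → ℝ) (x : ℝ) : ℝ :=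
  (σ ^ 2)⁻¹ * Real.exp ((2 * σ ^ 2)⁻¹ * x ^ 2) * SI σ g x

include hσ

variable {g : ℝ → ℝ} {C : ℝ} (hg : Continuous g) (hgb : ∀ x, |g x| ≤ C)

include hg hgb

lemma hasDerivAt_SI (x : ℝ) : HasDerivAt (SI σ g) (g x * ρ σ x) x := by
  have hint := rho_mul_integrable hσ hg hgb
  have key : ∀ u : ℝ, SI σ g u = SI σ g 0 + ∫ t in (0:ℝ)..u, g t * ρ σ t := by
    intro u
    have := intervalIntegral.integral_Iic_sub_Iic (μ := volume) (a := (0:ℝ)) (b := u)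
      hint.integrableOn hint.integrableOn
    unfold SI
    rw [← this]; ring
  have hd : HasDerivAt (fun u => SI σ g 0 + ∫ t in (0:ℝ)..u, g t * ρ σ t)
      (g x * ρ σ x) x := by
    refine HasDerivAt.const_add _ ?_
    exact intervalIntegral.integral_hasDerivAt_right hint.intervalIntegrable
      ((hg.mul (rho_cont σ)).stronglyMeasurableAtFilter _ _) ((hg.mul (rho_cont σ)).continuousAt)
  exact hd.congr_of_eventuallyEq (Filter.Eventually.of_forall key)

lemma hasDerivAt_SF (x : ℝ) :
    HasDerivAt (SF σ g) ((σ ^ 2)⁻¹ * (x * SF σ g x + g x)) x := by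
  have hE : HasDerivAt (fun x : ℝ => Real.exp ((2 * σ ^ 2)⁻¹ * x ^ 2))
      ((2 * σ ^ 2)⁻¹ * (2 * x) * Real.exp ((2 * σ ^ 2)⁻¹ * x ^ 2)) x := by
    have h1 : HasDerivAt (fun x : ℝ => (2 * σ ^ 2)⁻¹ * x ^ 2) ((2 * σ ^ 2)⁻¹ * (2 * x)) x := by
      have := (hasDerivAt_pow 2 x).const_mul ((2 * σ ^ 2)⁻¹)
      convert this using 1
      · rfl
      · rfl
      · norm_num
    simpa [mul_comm] using h1.exp
  have hd := ((hE.mul (hasDerivAt_SI hσ hg hgb x)).const_mul ((σ ^ 2)⁻¹))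
  have hEρ : Real.exp ((2 * σ ^ 2)⁻¹ * x ^ 2) * ρ σ x = 1 := by
    rw [ρ, ← Real.exp_add]; simp
  convert hd using 1
  · rfl
  · rfl
  · funext u; unfold SF; rw [Pi.mul_apply]; ring
  · unfold SF
    have h2 : Real.exp ((2 * σ ^ 2)⁻¹ * x ^ 2) * (g x * ρ σ x) = g x := by
      rw [show Real.exp ((2 * σ ^ 2)⁻¹ * x ^ 2) * (g x * ρ σ x)
          = (Real.exp ((2 * σ ^ 2)⁻¹ * x ^ 2) * ρ σ x) * g x by ring, hEρ, one_mul]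
    rw [h2]
    field_simp

end SteinF

section SteinBounds

variable {σ : ℝ} (hσ : 0 < σ) {g : ℝ → ℝ} {C : ℝ} (hg : Continuous g) (hgb : ∀ x, |g x| ≤ C)

include hσ hg hgb

lemma SI_abs_le (x : ℝ) {s : Set ℝ} (hs : MeasurableSet s) (hIic : Iic x ⊆ s) :
    |SI σ g x| ≤ C * ∫ t in s, ρ σ t := by
  have hint := (rho_mul_integrable hσ hg hgb)
  have hC : 0 ≤ C := (abs_nonneg (g 0)).trans (hgb 0)
  calc |SI σ g x| ≤ ∫ t in Iic x, |g t * ρ σ t| := by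
        rw [SI]
        exact norm_integral_le_integral_norm (μ := volume.restrict (Iic x)) (fun t => g t * ρ σ t)
    _ ≤ ∫ t in Iic x, C * ρ σ t := by
        refine setIntegral_mono_on hint.norm.integrableOn
          ((rho_integrable hσ).const_mul C).integrableOn measurableSet_Iic ?_
        intro t _
        rw [abs_mul, abs_of_pos (rho_pos σ t)]
        exact mul_le_mul_of_nonneg_right (hgb t) (rho_pos σ t).le
    _ ≤ ∫ t in s, C * ρ σ t := by
        refine setIntegral_mono_set ((rho_integrable hσ).const_mul C).integrableOn ?_ ?_
        · exact Filter.Eventually.of_forall fun t => mul_nonneg hC (rho_pos σ t).le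
        · exact HasSubset.Subset.eventuallyLE hIic
    _ = C * ∫ t in s, ρ σ t := integral_const_mul C _

lemma SI_abs_le_Ioi (hg0 : ∫ t, g t * ρ σ t = 0) (x : ℝ) :
    |SI σ g x| ≤ C * ∫ t in Ioi x, ρ σ t := by
  have hint := (rho_mul_integrable hσ hg hgb)
  have hsplit : SI σ g x + ∫ t in Ioi x, g t * ρ σ t = 0 := by
    rw [SI, intervalIntegral.integral_Iic_add_Ioi hint.integrableOn hint.integrableOn, hg0]
  have hSI : SI σ g x = -∫ t in Ioi x, g t * ρ σ t := by linarith
  rw [hSI, abs_neg]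
  calc |∫ t in Ioi x, g t * ρ σ t| ≤ ∫ t in Ioi x, |g t * ρ σ t| := by
        exact norm_integral_le_integral_norm (μ := volume.restrict (Ioi x)) (fun t => g t * ρ σ t)
    _ ≤ ∫ t in Ioi x, C * ρ σ t := by
        refine setIntegral_mono_on hint.norm.integrableOn
          ((rho_integrable hσ).const_mul C).integrableOn measurableSet_Ioi ?_
        intro t _
        rw [abs_mul, abs_of_pos (rho_pos σ t)]
        exact mul_le_mul_of_nonneg_right (hgb t) (rho_pos σ t).le
    _ = C * ∫ t in Ioi x, ρ σ t := integral_const_mul C _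

lemma SF_abs_bound (hg0 : ∫ t, g t * ρ σ t = 0) (x : ℝ) :
    |SF σ g x| ≤ max ((σ ^ 2)⁻¹ * Real.exp ((2 * σ ^ 2)⁻¹) * (C * ∫ t, ρ σ t)) C ∧
      |x * SF σ g x| ≤ max ((σ ^ 2)⁻¹ * Real.exp ((2 * σ ^ 2)⁻¹) * (C * ∫ t, ρ σ t)) C := by
  have hC : 0 ≤ C := (abs_nonneg (g 0)).trans (hgb 0)
  have hEρ : Real.exp ((2 * σ ^ 2)⁻¹ * x ^ 2) * ρ σ x = 1 := by
    rw [ρ, ← Real.exp_add]; simp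
  have habs : |SF σ g x| = (σ ^ 2)⁻¹ * Real.exp ((2 * σ ^ 2)⁻¹ * x ^ 2) * |SI σ g x| := by
    rw [SF, abs_mul, abs_mul]
    rw [abs_of_pos (by positivity : (0:ℝ) < (σ ^ 2)⁻¹), abs_of_pos (Real.exp_pos _)]
  rcases le_or_gt (|x|) 1 with hx | hx
  · have h1 : |SF σ g x| ≤ (σ ^ 2)⁻¹ * Real.exp ((2 * σ ^ 2)⁻¹) * (C * ∫ t, ρ σ t) := by
      rw [habs]
      have e1 : (σ ^ 2)⁻¹ * Real.exp ((2 * σ ^ 2)⁻¹ * x ^ 2)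
          ≤ (σ ^ 2)⁻¹ * Real.exp ((2 * σ ^ 2)⁻¹) := by
        refine mul_le_mul_of_nonneg_left (Real.exp_le_exp.2 ?_) (by positivity)
        nth_rewrite 2 [show ((2 * σ ^ 2)⁻¹ : ℝ) = (2 * σ ^ 2)⁻¹ * 1 by ring]
        exact mul_le_mul_of_nonneg_left (by nlinarith [abs_nonneg x, sq_abs x]) (b_pos hσ).le
      have e2 : |SI σ g x| ≤ C * ∫ t, ρ σ t := by
        simpa using SI_abs_le hσ hg hgb x MeasurableSet.univ (subset_univ _)
      exact mul_le_mul e1 e2 (abs_nonneg _) (by positivity)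
    refine ⟨h1.trans (le_max_left _ _), ?_⟩
    rw [abs_mul]
    calc |x| * |SF σ g x| ≤ 1 * |SF σ g x| := mul_le_mul_of_nonneg_right hx (abs_nonneg _)
      _ = |SF σ g x| := one_mul _
      _ ≤ _ := h1.trans (le_max_left _ _)
  · have hxne : x ≠ 0 := by intro h; rw [h] at hx; rw [abs_zero] at hx; linarith
    have key : |SF σ g x| ≤ C / |x| := by
      rw [habs]
      have hSIb : |SI σ g x| ≤ C * (σ ^ 2 / |x| * ρ σ x) := by
        rcases lt_or_ge 0 x with hxpos | hxneg
        · rw [abs_of_pos hxpos]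
          exact (SI_abs_le_Ioi hσ hg hgb hg0 x).trans
            (mul_le_mul_of_nonneg_left (rho_tail hσ x hxpos) hC)
        · have hxneg' : 0 < -x := by
            rcases hxneg.lt_or_eq with h | h
            · exact neg_pos.2 h
            · exact absurd h hxne
          rw [abs_of_nonpos hxneg]
          have hflip : ∫ t in Iic x, ρ σ t = ∫ t in Ioi (-x), ρ σ t := by
            rw [← integral_comp_neg_Iic]
            congr 1
            funext t
            simp [ρ]
          have h2 := (SI_abs_le hσ hg hgb x measurableSet_Iic subset_rfl)
          rw [hflip] at h2
          refine h2.trans (mul_le_mul_of_nonneg_left ?_ hC)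
          have h3 := rho_tail hσ (-x) hxneg'
          simpa [ρ] using h3
      calc (σ ^ 2)⁻¹ * Real.exp ((2 * σ ^ 2)⁻¹ * x ^ 2) * |SI σ g x|
          ≤ (σ ^ 2)⁻¹ * Real.exp ((2 * σ ^ 2)⁻¹ * x ^ 2) * (C * (σ ^ 2 / |x| * ρ σ x)) :=
            mul_le_mul_of_nonneg_left hSIb (by positivity)
        _ = C / |x| * (Real.exp ((2 * σ ^ 2)⁻¹ * x ^ 2) * ρ σ x) * ((σ ^ 2)⁻¹ * σ ^ 2) := by
            ring
        _ = C / |x| := by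
            rw [hEρ, inv_mul_cancel₀ (by positivity : (σ:ℝ) ^ 2 ≠ 0)]; ring
    refine ⟨(key.trans (div_le_self hC hx.le)).trans (le_max_right _ _), ?_⟩
    rw [abs_mul]
    refine le_trans ?_ (le_max_right _ _)
    calc |x| * |SF σ g x| ≤ |x| * (C / |x|) := mul_le_mul_of_nonneg_left key (abs_nonneg _)
      _ = C := by field_simp

end SteinBounds

section SteinMore

variable {σ : ℝ} (hσ : 0 < σ) {g : ℝ → ℝ} {C : ℝ} (hg : Continuous g) (hgb : ∀ x, |g x| ≤ C)

include hσ hg hgb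

lemma differentiable_SF : Differentiable ℝ (SF σ g) :=
  fun x => (hasDerivAt_SF hσ hg hgb x).differentiableAt

lemma deriv_SF (x : ℝ) : deriv (SF σ g) x = (σ ^ 2)⁻¹ * (x * SF σ g x + g x) :=
  (hasDerivAt_SF hσ hg hgb x).deriv

lemma contDiff_SF : ContDiff ℝ 1 (SF σ g) := by
  rw [contDiff_one_iff_deriv]
  refine ⟨differentiable_SF hσ hg hgb, ?_⟩
  have : deriv (SF σ g) = fun x => (σ ^ 2)⁻¹ * (x * SF σ g x + g x) :=
    funext (deriv_SF hσ hg hgb)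
  rw [this]
  exact continuous_const.mul ((continuous_id.mul
    (differentiable_SF hσ hg hgb).continuous).add hg)

lemma stein_eq (x : ℝ) : σ ^ 2 * deriv (SF σ g) x - x * SF σ g x = g x := by
  rw [deriv_SF hσ hg hgb]
  field_simp
  ring

end SteinMore

section Bridge

open Real ProbabilityTheory

variable {σ : ℝ} (hσ : 0 < σ)

include hσ

lemma rho_integral : ∫ t, ρ σ t = Real.sqrt (2 * π * σ ^ 2) := by
  have h := integral_gaussian ((2 * σ ^ 2)⁻¹)
  simp only [ρ]
  rw [h]
  congr 1
  field_simp

lemma rho_integral_pos : 0 < ∫ t, ρ σ t := by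
  rw [rho_integral hσ]
  have : (0:ℝ) < 2 * π * σ ^ 2 := by positivity
  exact Real.sqrt_pos.2 this

lemma integral_gaussianReal_bridge (g : ℝ → ℝ) (hgm : Measurable g) :
    ∫ x, g x ∂(gaussianReal 0 ⟨σ ^ 2, sq_nonneg σ⟩) = (∫ t, ρ σ t)⁻¹ * ∫ t, g t * ρ σ t := by
  have hv : (⟨σ ^ 2, sq_nonneg σ⟩ : NNReal) ≠ 0 := by
    intro h
    have := congrArg (NNReal.toReal) h
    exact (by positivity : (0:ℝ) < σ ^ 2).ne' this
  rw [gaussianReal_of_var_ne_zero 0 hv]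
  have hpdf_meas : Measurable fun x =>
      (ProbabilityTheory.gaussianPDFReal 0 ⟨σ ^ 2, sq_nonneg σ⟩ x).toNNReal :=
    (ProbabilityTheory.measurable_gaussianPDFReal _ _).real_toNNReal
  have hrw : ProbabilityTheory.gaussianPDF 0 ⟨σ ^ 2, sq_nonneg σ⟩ = fun x =>
      ((ProbabilityTheory.gaussianPDFReal 0 ⟨σ ^ 2, sq_nonneg σ⟩ x).toNNReal : ENNReal) := rfl
  rw [hrw, integral_withDensity_eq_integral_smul hpdf_meas]
  have hpt : ∀ x, ((ProbabilityTheory.gaussianPDFReal 0 ⟨σ ^ 2, sq_nonneg σ⟩ x).toNNReal : NNReal)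
      • g x = (Real.sqrt (2 * π * σ ^ 2))⁻¹ * (g x * ρ σ x) := by
    intro x
    rw [NNReal.smul_def]
    erw [Real.coe_toNNReal _ (ProbabilityTheory.gaussianPDFReal_nonneg _ _ _)]
    unfold ProbabilityTheory.gaussianPDFReal
    simp only [sub_zero]
    change ((√(2 * π * σ ^ 2))⁻¹ * rexp (-x ^ 2 / (2 * σ ^ 2))) • g x = _
    rw [ρ]
    rw [show -x ^ 2 / (2 * σ ^ 2) = -(2 * σ ^ 2)⁻¹ * x ^ 2 by field_simp]
    rw [smul_eq_mul]
    ring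
  simp_rw [hpt]
  rw [integral_const_mul, rho_integral hσ]

end Bridge

section Key

open ProbabilityTheory

variable {d : ℕ} {Ω : Type*} [MeasureSpace Ω] [IsProbabilityMeasure (ℙ : Measure Ω)]
  {σ : ℝ} {X : Ω → ℝ} {Y : Ω → EuclideanSpace ℝ (Fin d)}

lemma key_identity (hσ : 0 < σ) (hX : Measurable X) (hY : Measurable Y)
    (hstein : ∀ f : ℝ × EuclideanSpace ℝ (Fin d) → ℝ, ContDiff ℝ 1 f →
      (∃ C : ℝ, ∀ p, |f p| ≤ C) →
      (∃ C : ℝ, ∀ (x : ℝ) (y : EuclideanSpace ℝ (Fin d)),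
        |deriv (fun t => f (t, y)) x| ≤ C) →
      ∫ ω, (σ ^ 2 * deriv (fun t => f (t, Y ω)) (X ω) - X ω * f (X ω, Y ω)) ∂ℙ = 0)
    {g : ℝ → ℝ} (hg : Continuous g) {C : ℝ} (hgb : ∀ x, |g x| ≤ C)
    {h : EuclideanSpace ℝ (Fin d) → ℝ} (hh : ContDiff ℝ 1 h) {Ch : ℝ}
    (hhb : ∀ y, |h y| ≤ Ch) :
    ∫ ω, g (X ω) * h (Y ω) ∂ℙ
      = (∫ x, g x ∂(gaussianReal 0 ⟨σ ^ 2, sq_nonneg σ⟩)) * ∫ ω, h (Y ω) ∂ℙ := by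
  set m : ℝ := ∫ x, g x ∂(gaussianReal 0 ⟨σ ^ 2, sq_nonneg σ⟩) with hm
  set g' : ℝ → ℝ := fun x => g x - m with hg'def
  have hg' : Continuous g' := hg.sub continuous_const
  have hg'b : ∀ x, |g' x| ≤ C + |m| := fun x =>
    (abs_sub (g x) m).trans (add_le_add_left (hgb x) _)
  have hItot := rho_integral_pos hσ
  have hg'0 : ∫ t, g' t * ρ σ t = 0 := by
    have e : (fun t => g' t * ρ σ t) = fun t => g t * ρ σ t - m * ρ σ t := by
      funext t; simp only [hg'def]; ring
    rw [e, integral_sub (rho_mul_integrable hσ hg hgb) ((rho_integrable hσ).const_mul m),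
      integral_const_mul]
    rw [hm, integral_gaussianReal_bridge hσ g hg.measurable]
    field_simp
    ring
  set F : ℝ → ℝ := SF σ g' with hF
  set M₀ : ℝ := max ((σ ^ 2)⁻¹ * Real.exp ((2 * σ ^ 2)⁻¹) * ((C + |m|) * ∫ t, ρ σ t)) (C + |m|)
    with hM₀
  have hFb : ∀ x, |F x| ≤ M₀ := fun x => (SF_abs_bound hσ hg' hg'b hg'0 x).1
  have hxFb : ∀ x, |x * F x| ≤ M₀ := fun x => (SF_abs_bound hσ hg' hg'b hg'0 x).2
  have hM₀0 : 0 ≤ M₀ := (abs_nonneg _).trans (hFb 0)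
  have hCh0 : 0 ≤ Ch := (abs_nonneg _).trans (hhb 0)
  have hC'0 : 0 ≤ C + |m| := (abs_nonneg _).trans (hg'b 0)
  set f : ℝ × EuclideanSpace ℝ (Fin d) → ℝ := fun p => F p.1 * h p.2 with hfdef
  have hf1 : ContDiff ℝ 1 f :=
    ((contDiff_SF hσ hg' hg'b).comp contDiff_fst).mul (hh.comp contDiff_snd)
  have hfb : ∀ p, |f p| ≤ M₀ * Ch := by
    intro p
    rw [hfdef, abs_mul]
    exact mul_le_mul (hFb _) (hhb _) (abs_nonneg _) hM₀0
  have hderiv_eq : ∀ (x : ℝ) (y : EuclideanSpace ℝ (Fin d)),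
      deriv (fun t => f (t, y)) x = deriv F x * h y := by
    intro x y
    have : (fun t => f (t, y)) = fun t => F t * h y := rfl
    rw [this]
    exact ((hasDerivAt_SF hσ hg' hg'b x).mul_const (h y)).deriv.trans
      (by rw [deriv_SF hσ hg' hg'b])
  have hderivb : ∀ (x : ℝ) (y : EuclideanSpace ℝ (Fin d)),
      |deriv (fun t => f (t, y)) x| ≤ ((σ ^ 2)⁻¹ * (M₀ + (C + |m|))) * Ch := by
    intro x y
    rw [hderiv_eq, abs_mul]
    refine mul_le_mul ?_ (hhb _) (abs_nonneg _) (by positivity)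
    rw [deriv_SF hσ hg' hg'b, abs_mul, abs_of_pos (by positivity : (0:ℝ) < (σ ^ 2)⁻¹)]
    refine mul_le_mul_of_nonneg_left ?_ (by positivity)
    exact (abs_add_le _ _).trans (add_le_add (hxFb x) (hg'b x))
  have hint0 := hstein f hf1 ⟨M₀ * Ch, hfb⟩ ⟨_, hderivb⟩
  have hptw : ∀ ω, σ ^ 2 * deriv (fun t => f (t, Y ω)) (X ω) - X ω * f (X ω, Y ω)
      = g' (X ω) * h (Y ω) := by
    intro ω
    rw [hderiv_eq]
    have hs := stein_eq hσ hg' hg'b (X ω)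
    have : σ ^ 2 * (deriv F (X ω) * h (Y ω)) - X ω * f (X ω, Y ω)
        = (σ ^ 2 * deriv F (X ω) - X ω * F (X ω)) * h (Y ω) := by
      rw [hfdef]; ring
    rw [this, hs]
  rw [integral_congr_ae (Filter.Eventually.of_forall hptw)] at hint0
  -- integrabilities
  have hmes1 : AEStronglyMeasurable (fun ω => g (X ω) * h (Y ω)) ℙ :=
    ((hg.measurable.comp hX).mul ((hh.continuous.measurable).comp hY)).aestronglyMeasurable
  have hI1 : Integrable (fun ω => g (X ω) * h (Y ω)) ℙ := by
    refine (integrable_const (C * Ch)).mono' hmes1 (Filter.Eventually.of_forall fun ω => ?_)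
    rw [Real.norm_eq_abs, abs_mul]
    exact mul_le_mul (hgb _) (hhb _) (abs_nonneg _) ((abs_nonneg _).trans (hgb 0))
  have hI2 : Integrable (fun ω => h (Y ω)) ℙ := by
    refine (integrable_const Ch).mono'
      ((hh.continuous.measurable.comp hY)).aestronglyMeasurable
      (Filter.Eventually.of_forall fun ω => ?_)
    rw [Real.norm_eq_abs]; exact hhb _
  have hsplit : (fun ω => g' (X ω) * h (Y ω))
      = fun ω => g (X ω) * h (Y ω) - m * h (Y ω) := by
    funext ω; simp only [hg'def]; ring
  rw [hsplit, integral_sub hI1 (hI2.const_mul m), integral_const_mul] at hint0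
  linarith

end Key

section KeyCont

open ProbabilityTheory Metric
open scoped Convolution

variable {d : ℕ} {Ω : Type*} [MeasureSpace Ω] [IsProbabilityMeasure (ℙ : Measure Ω)]
  {σ : ℝ} {X : Ω → ℝ} {Y : Ω → EuclideanSpace ℝ (Fin d)}

lemma key_identity_cont (hσ : 0 < σ) (hX : Measurable X) (hY : Measurable Y)
    (hstein : ∀ f : ℝ × EuclideanSpace ℝ (Fin d) → ℝ, ContDiff ℝ 1 f →
      (∃ C : ℝ, ∀ p, |f p| ≤ C) →
      (∃ C : ℝ, ∀ (x : ℝ) (y : EuclideanSpace ℝ (Fin d)),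
        |deriv (fun t => f (t, y)) x| ≤ C) →
      ∫ ω, (σ ^ 2 * deriv (fun t => f (t, Y ω)) (X ω) - X ω * f (X ω, Y ω)) ∂ℙ = 0)
    {g : ℝ → ℝ} (hg : Continuous g) {C : ℝ} (hgb : ∀ x, |g x| ≤ C)
    {h : EuclideanSpace ℝ (Fin d) → ℝ} (hh : Continuous h) {Ch : ℝ}
    (hhb : ∀ y, |h y| ≤ Ch) :
    ∫ ω, g (X ω) * h (Y ω) ∂ℙ
      = (∫ x, g x ∂(gaussianReal 0 ⟨σ ^ 2, sq_nonneg σ⟩)) * ∫ ω, h (Y ω) ∂ℙ := by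
  have hC0 : 0 ≤ C := (abs_nonneg _).trans (hgb 0)
  have hCh0 : 0 ≤ Ch := (abs_nonneg _).trans (hhb 0)
  set φ : ℕ → ContDiffBump (0 : EuclideanSpace ℝ (Fin d)) := fun n =>
    { rIn := ((n : ℝ) + 1)⁻¹ / 2
      rOut := ((n : ℝ) + 1)⁻¹
      rIn_pos := by positivity
      rIn_lt_rOut := by
        have : (0:ℝ) < ((n : ℝ) + 1)⁻¹ := by positivity
        linarith } with hφdef
  set hn : ℕ → EuclideanSpace ℝ (Fin d) → ℝ :=
    fun n => ((φ n).normed volume) ⋆[ContinuousLinearMap.lsmul ℝ ℝ, volume] h with hhn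
  have hrOut : Filter.Tendsto (fun n => (φ n).rOut) Filter.atTop (nhds 0) := by
    simp only [hφdef]
    simpa only [one_div] using tendsto_one_div_add_atTop_nhds_zero_nat (𝕜 := ℝ)
  have hsm : ∀ n, ContDiff ℝ 1 (hn n) := by
    intro n
    exact HasCompactSupport.contDiff_convolution_left (μ := (volume : Measure (EuclideanSpace ℝ (Fin d))))
      (ContinuousLinearMap.lsmul ℝ ℝ) ((φ n).hasCompactSupport_normed)
      ((φ n).contDiff_normed) (hh.locallyIntegrable)
  have hclose : ∀ n y, |hn n y - h y| ≤ 2 * Ch := by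
    intro n y
    have := (φ n).dist_normed_convolution_le (μ := volume) hh.aestronglyMeasurable
      (fun x _ => by
        rw [Real.dist_eq]
        calc |h x - h y| ≤ |h x| + |h y| := abs_sub _ _
          _ ≤ Ch + Ch := add_le_add (hhb x) (hhb y)
          _ = 2 * Ch := by ring)
    rw [Real.dist_eq] at this
    exact this
  have hnb : ∀ n y, |hn n y| ≤ 3 * Ch := by
    intro n y
    calc |hn n y| = |(hn n y - h y) + h y| := by ring_nf
      _ ≤ |hn n y - h y| + |h y| := abs_add_le _ _
      _ ≤ 2 * Ch + Ch := add_le_add (hclose n y) (hhb y)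
      _ = 3 * Ch := by ring
  have hptlim : ∀ y, Filter.Tendsto (fun n => hn n y) Filter.atTop (nhds (h y)) :=
    fun y => ContDiffBump.convolution_tendsto_right_of_continuous (μ := volume) hrOut hh y
  -- identities for each n
  have hids : ∀ n, ∫ ω, g (X ω) * hn n (Y ω) ∂ℙ
      = (∫ x, g x ∂(gaussianReal 0 ⟨σ ^ 2, sq_nonneg σ⟩)) * ∫ ω, hn n (Y ω) ∂ℙ :=
    fun n => key_identity hσ hX hY hstein hg hgb (hsm n) (hnb n)
  -- limits
  have hlim1 : Filter.Tendsto (fun n => ∫ ω, g (X ω) * hn n (Y ω) ∂ℙ) Filter.atTop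
      (nhds (∫ ω, g (X ω) * h (Y ω) ∂ℙ)) := by
    refine MeasureTheory.tendsto_integral_of_dominated_convergence (fun _ => C * (3 * Ch)) ?_ ?_ ?_ ?_
    · intro n
      exact ((hg.measurable.comp hX).mul (((hsm n).continuous.measurable).comp hY)).aestronglyMeasurable
    · exact integrable_const _
    · intro n
      refine Filter.Eventually.of_forall fun ω => ?_
      rw [Real.norm_eq_abs, abs_mul]
      exact mul_le_mul (hgb _) (hnb n _) (abs_nonneg _) hC0
    · exact Filter.Eventually.of_forall fun ω =>
        (Filter.Tendsto.const_mul _ (hptlim (Y ω)))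
  have hlim2 : Filter.Tendsto (fun n => ∫ ω, hn n (Y ω) ∂ℙ) Filter.atTop
      (nhds (∫ ω, h (Y ω) ∂ℙ)) := by
    refine MeasureTheory.tendsto_integral_of_dominated_convergence (fun _ => 3 * Ch) ?_ ?_ ?_ ?_
    · intro n
      exact (((hsm n).continuous.measurable).comp hY).aestronglyMeasurable
    · exact integrable_const _
    · intro n
      exact Filter.Eventually.of_forall fun ω => by
        rw [Real.norm_eq_abs]; exact hnb n _
    · exact Filter.Eventually.of_forall fun ω => hptlim (Y ω)
  have := Filter.Tendsto.const_mul (∫ x, g x ∂(gaussianReal 0 ⟨σ ^ 2, sq_nonneg σ⟩)) hlim2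
  rw [funext hids] at hlim1
  exact tendsto_nhds_unique hlim1 this

end KeyCont

section Closed

open ProbabilityTheory Metric

variable {d : ℕ} {Ω : Type*} [MeasureSpace Ω] [IsProbabilityMeasure (ℙ : Measure Ω)]
  {σ : ℝ} {X : Ω → ℝ} {Y : Ω → EuclideanSpace ℝ (Fin d)}

/-- continuous approximations to the indicator of a set, from above -/
noncomputable def capprox {α : Type*} [MetricSpace α] (G : Set α) (n : ℕ) (y : α) : ℝ :=
  max (1 - n * infDist y G) 0

lemma capprox_cont {α : Type*} [MetricSpace α] (G : Set α) (n : ℕ) :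
    Continuous (capprox G n) :=
  (((continuous_const.sub ((continuous_const.mul (continuous_infDist_pt G))))).max
    continuous_const)

lemma capprox_mem {α : Type*} [MetricSpace α] (G : Set α) (n : ℕ) (y : α) :
    |capprox G n y| ≤ 1 := by
  rw [abs_le]
  constructor
  · exact le_trans (by norm_num) (le_max_right _ _)
  · apply max_le _ zero_le_one
    have : (0:ℝ) ≤ n * infDist y G := mul_nonneg (Nat.cast_nonneg n) infDist_nonneg
    linarith

lemma capprox_tendsto {α : Type*} [MetricSpace α] {G : Set α} (hG : IsClosed G)
    (hne : G.Nonempty) (y : α) :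
    Filter.Tendsto (fun n => capprox G n y) Filter.atTop
      (nhds (Set.indicator G (fun _ => (1:ℝ)) y)) := by
  by_cases hy : y ∈ G
  · rw [Set.indicator_of_mem hy]
    have : ∀ n, capprox G n y = 1 := by
      intro n
      rw [capprox, infDist_zero_of_mem hy]
      simp
    rw [funext this]
    exact tendsto_const_nhds
  · rw [Set.indicator_of_notMem hy]
    have hpos : 0 < infDist y G := (hG.notMem_iff_infDist_pos hne).1 hy
    obtain ⟨N, hN⟩ := exists_nat_ge (1 / infDist y G)
    refine Filter.Tendsto.congr' ?_ (tendsto_const_nhds (x := (0:ℝ)))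
    filter_upwards [Filter.eventually_ge_atTop N] with n hn
    have h1 : 1 ≤ (n : ℝ) * infDist y G := by
      rw [div_le_iff₀ hpos] at hN
      calc (1:ℝ) ≤ N * infDist y G := hN
        _ ≤ n * infDist y G := by
          apply mul_le_mul_of_nonneg_right (Nat.cast_le.2 hn) hpos.le
    rw [capprox]
    rw [max_eq_right (by linarith)]

lemma key_identity_closed (hσ : 0 < σ) (hX : Measurable X) (hY : Measurable Y)
    (hstein : ∀ f : ℝ × EuclideanSpace ℝ (Fin d) → ℝ, ContDiff ℝ 1 f →
      (∃ C : ℝ, ∀ p, |f p| ≤ C) →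
      (∃ C : ℝ, ∀ (x : ℝ) (y : EuclideanSpace ℝ (Fin d)),
        |deriv (fun t => f (t, y)) x| ≤ C) →
      ∫ ω, (σ ^ 2 * deriv (fun t => f (t, Y ω)) (X ω) - X ω * f (X ω, Y ω)) ∂ℙ = 0)
    {g : ℝ → ℝ} (hg : Continuous g) {C : ℝ} (hgb : ∀ x, |g x| ≤ C)
    {G : Set (EuclideanSpace ℝ (Fin d))} (hG : IsClosed G) :
    ∫ ω in Y ⁻¹' G, g (X ω) ∂ℙ
      = (∫ x, g x ∂(gaussianReal 0 ⟨σ ^ 2, sq_nonneg σ⟩)) * (ℙ (Y ⁻¹' G)).toReal := by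
  rcases G.eq_empty_or_nonempty with rfl | hne
  · simp
  have hC0 : 0 ≤ C := (abs_nonneg _).trans (hgb 0)
  have hids : ∀ n, ∫ ω, g (X ω) * capprox G n (Y ω) ∂ℙ
      = (∫ x, g x ∂(gaussianReal 0 ⟨σ ^ 2, sq_nonneg σ⟩)) * ∫ ω, capprox G n (Y ω) ∂ℙ :=
    fun n => key_identity_cont hσ hX hY hstein hg hgb (capprox_cont G n) (capprox_mem G n)
  have hGm : MeasurableSet (Y ⁻¹' G) := hY hG.measurableSet
  have hlim1 : Filter.Tendsto (fun n => ∫ ω, g (X ω) * capprox G n (Y ω) ∂ℙ) Filter.atTop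
      (nhds (∫ ω in Y ⁻¹' G, g (X ω) ∂ℙ)) := by
    have hrw : ∫ ω in Y ⁻¹' G, g (X ω) ∂ℙ
        = ∫ ω, (Y ⁻¹' G).indicator (fun ω => g (X ω)) ω ∂ℙ := (integral_indicator hGm).symm
    rw [hrw]
    refine MeasureTheory.tendsto_integral_of_dominated_convergence (fun _ => C) ?_ ?_ ?_ ?_
    · intro n
      exact ((hg.measurable.comp hX).mul
        (((capprox_cont G n).measurable).comp hY)).aestronglyMeasurable
    · exact integrable_const _
    · intro n
      refine Filter.Eventually.of_forall fun ω => ?_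
      rw [Real.norm_eq_abs, abs_mul]
      calc |g (X ω)| * |capprox G n (Y ω)| ≤ C * 1 :=
            mul_le_mul (hgb _) (capprox_mem G n _) (abs_nonneg _) hC0
        _ = C := mul_one C
    · refine Filter.Eventually.of_forall fun ω => ?_
      have h1 := (capprox_tendsto hG hne (Y ω)).const_mul (g (X ω))
      have h2 : (Y ⁻¹' G).indicator (fun ω => g (X ω)) ω
          = g (X ω) * Set.indicator G (fun _ => (1:ℝ)) (Y ω) := by
        by_cases hy : Y ω ∈ G
        · rw [Set.indicator_of_mem hy, Set.indicator_of_mem (by exact hy), mul_one]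
        · rw [Set.indicator_of_notMem hy, Set.indicator_of_notMem (by exact hy), mul_zero]
      rw [h2]
      exact h1
  have hlim2 : Filter.Tendsto (fun n => ∫ ω, capprox G n (Y ω) ∂ℙ) Filter.atTop
      (nhds ((ℙ (Y ⁻¹' G)).toReal)) := by
    have hrw : (ℙ (Y ⁻¹' G)).toReal = ∫ ω, (Y ⁻¹' G).indicator (fun _ => (1:ℝ)) ω ∂ℙ := by
      exact (MeasureTheory.integral_indicator_one hGm).symm
    rw [hrw]
    refine MeasureTheory.tendsto_integral_of_dominated_convergence (fun _ => 1) ?_ ?_ ?_ ?_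
    · intro n
      exact (((capprox_cont G n).measurable).comp hY).aestronglyMeasurable
    · exact integrable_const _
    · intro n
      exact Filter.Eventually.of_forall fun ω => by
        rw [Real.norm_eq_abs]; exact capprox_mem G n _
    · refine Filter.Eventually.of_forall fun ω => ?_
      have h2 : (Y ⁻¹' G).indicator (fun _ => (1:ℝ)) ω
          = Set.indicator G (fun _ => (1:ℝ)) (Y ω) := by
        by_cases hy : Y ω ∈ G
        · rw [Set.indicator_of_mem hy, Set.indicator_of_mem (by exact hy)]
        · rw [Set.indicator_of_notMem hy, Set.indicator_of_notMem (by exact hy)]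
      rw [h2]
      exact capprox_tendsto hG hne (Y ω)
  rw [funext hids] at hlim1
  exact tendsto_nhds_unique hlim1
    (Filter.Tendsto.const_mul (∫ x, g x ∂(gaussianReal 0 ⟨σ ^ 2, sq_nonneg σ⟩)) hlim2)

end Closed

section Rect

open ProbabilityTheory Metric

variable {d : ℕ} {Ω : Type*} [MeasureSpace Ω] [IsProbabilityMeasure (ℙ : Measure Ω)]
  {σ : ℝ} {X : Ω → ℝ} {Y : Ω → EuclideanSpace ℝ (Fin d)}

lemma rect_identity (hσ : 0 < σ) (hX : Measurable X) (hY : Measurable Y)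
    (hstein : ∀ f : ℝ × EuclideanSpace ℝ (Fin d) → ℝ, ContDiff ℝ 1 f →
      (∃ C : ℝ, ∀ p, |f p| ≤ C) →
      (∃ C : ℝ, ∀ (x : ℝ) (y : EuclideanSpace ℝ (Fin d)),
        |deriv (fun t => f (t, y)) x| ≤ C) →
      ∫ ω, (σ ^ 2 * deriv (fun t => f (t, Y ω)) (X ω) - X ω * f (X ω, Y ω)) ∂ℙ = 0)
    {F : Set ℝ} (hF : IsClosed F) {G : Set (EuclideanSpace ℝ (Fin d))} (hG : IsClosed G) :
    (ℙ (X ⁻¹' F ∩ Y ⁻¹' G)).toReal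
      = ((gaussianReal 0 ⟨σ ^ 2, sq_nonneg σ⟩) F).toReal * (ℙ (Y ⁻¹' G)).toReal := by
  rcases F.eq_empty_or_nonempty with rfl | hne
  · simp
  have hFm : MeasurableSet (X ⁻¹' F) := hX hF.measurableSet
  have hGm : MeasurableSet (Y ⁻¹' G) := hY hG.measurableSet
  have hids : ∀ n, ∫ ω in Y ⁻¹' G, capprox F n (X ω) ∂ℙ
      = (∫ x, capprox F n x ∂(gaussianReal 0 ⟨σ ^ 2, sq_nonneg σ⟩)) * (ℙ (Y ⁻¹' G)).toReal :=
    fun n => key_identity_closed hσ hX hY hstein (capprox_cont F n) (capprox_mem F n) hG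
  have hlim1 : Filter.Tendsto (fun n => ∫ ω in Y ⁻¹' G, capprox F n (X ω) ∂ℙ) Filter.atTop
      (nhds ((ℙ (X ⁻¹' F ∩ Y ⁻¹' G)).toReal)) := by
    have hrw : (ℙ (X ⁻¹' F ∩ Y ⁻¹' G)).toReal
        = ∫ ω in Y ⁻¹' G, (X ⁻¹' F).indicator (fun _ => (1:ℝ)) ω ∂ℙ := by
      have h1 := MeasureTheory.integral_indicator_one (μ := (ℙ : Measure Ω).restrict (Y ⁻¹' G)) hFm
      rw [measureReal_def, Measure.restrict_apply hFm] at h1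
      exact h1.symm
    rw [hrw]
    refine MeasureTheory.tendsto_integral_of_dominated_convergence (fun _ => 1) ?_ ?_ ?_ ?_
    · intro n
      exact (((capprox_cont F n).measurable).comp hX).aestronglyMeasurable
    · exact integrable_const _
    · intro n
      exact Filter.Eventually.of_forall fun ω => by
        rw [Real.norm_eq_abs]; exact capprox_mem F n _
    · refine Filter.Eventually.of_forall fun ω => ?_
      have h2 : (X ⁻¹' F).indicator (fun _ => (1:ℝ)) ω
          = Set.indicator F (fun _ => (1:ℝ)) (X ω) := by
        by_cases hx : X ω ∈ F
        · rw [Set.indicator_of_mem hx, Set.indicator_of_mem (by exact hx)]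
        · rw [Set.indicator_of_notMem hx, Set.indicator_of_notMem (by exact hx)]
      rw [h2]
      exact capprox_tendsto hF hne (X ω)
  have hlim2 : Filter.Tendsto
      (fun n => ∫ x, capprox F n x ∂(gaussianReal 0 ⟨σ ^ 2, sq_nonneg σ⟩)) Filter.atTop
      (nhds (((gaussianReal 0 ⟨σ ^ 2, sq_nonneg σ⟩) F).toReal)) := by
    have hrw : ((gaussianReal 0 ⟨σ ^ 2, sq_nonneg σ⟩) F).toReal
        = ∫ x, F.indicator (fun _ => (1:ℝ)) x ∂(gaussianReal 0 ⟨σ ^ 2, sq_nonneg σ⟩) :=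
      (MeasureTheory.integral_indicator_one hF.measurableSet).symm
    rw [hrw]
    refine MeasureTheory.tendsto_integral_of_dominated_convergence (fun _ => 1) ?_ ?_ ?_ ?_
    · intro n
      exact ((capprox_cont F n).measurable).aestronglyMeasurable
    · haveI := instIsProbabilityMeasureGaussianReal 0 ⟨σ ^ 2, sq_nonneg σ⟩
      exact integrable_const _
    · intro n
      exact Filter.Eventually.of_forall fun x => by
        rw [Real.norm_eq_abs]; exact capprox_mem F n _
    · exact Filter.Eventually.of_forall fun x => capprox_tendsto hF hne x
  rw [funext hids] at hlim1
  exact tendsto_nhds_unique hlim1 (hlim2.mul_const _)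

end Rect

open ProbabilityTheory



/-- If `X` is integrable and for every continuously differentiable
`f : ℝ × ℝ^d → ℝ` with `f` and `∂_x f` bounded one has
`E[σ² ⬝ ∂_x f(X,Y) − X ⬝ f(X,Y)] = 0`, then `X ~ N(0, σ²)` and `X` is independent of `Y`. -/
theorem stmt1 {d : ℕ} (hd : 1 ≤ d) {Ω : Type*} [MeasureSpace Ω]
    [IsProbabilityMeasure (ℙ : Measure Ω)]
    (σ : ℝ) (hσ : 0 < σ)
    (X : Ω → ℝ) (Y : Ω → EuclideanSpace ℝ (Fin d))
    (hX : Measurable X) (hY : Measurable Y)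
    (hXint : Integrable X ℙ)
    (hstein : ∀ f : ℝ × EuclideanSpace ℝ (Fin d) → ℝ, ContDiff ℝ 1 f →
      (∃ C : ℝ, ∀ p, |f p| ≤ C) →
      (∃ C : ℝ, ∀ (x : ℝ) (y : EuclideanSpace ℝ (Fin d)),
        |deriv (fun t => f (t, y)) x| ≤ C) →
      ∫ ω, (σ ^ 2 * deriv (fun t => f (t, Y ω)) (X ω) - X ω * f (X ω, Y ω)) ∂ℙ = 0) :
    Measure.map X ℙ = gaussianReal 0 ⟨σ ^ 2, sq_nonneg σ⟩ ∧ IndepFun X Y ℙ := by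
  set γ : Measure ℝ := gaussianReal 0 ⟨σ ^ 2, sq_nonneg σ⟩ with hγ
  haveI : IsProbabilityMeasure γ := instIsProbabilityMeasureGaussianReal 0 ⟨σ ^ 2, sq_nonneg σ⟩
  have hXF : ∀ {F : Set ℝ}, IsClosed F → ℙ (X ⁻¹' F) = γ F := by
    intro F hF
    have h := rect_identity hσ hX hY hstein hF isClosed_univ
    simp only [Set.preimage_univ, Set.inter_univ, measure_univ, ENNReal.toReal_one,
      mul_one] at h
    exact (ENNReal.toReal_eq_toReal_iff' (measure_ne_top _ _) (measure_ne_top _ _)).1 h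
  have hmap : Measure.map X ℙ = γ := by
    have hprob : IsProbabilityMeasure (Measure.map X ℙ) :=
      Measure.isProbabilityMeasure_map hX.aemeasurable
    refine MeasureTheory.ext_of_generate_finite {s : Set ℝ | IsClosed s} ?_
      isPiSystem_isClosed ?_ ?_
    · rw [BorelSpace.measurable_eq (α := ℝ), borel_eq_generateFrom_isClosed]
    · intro F hF
      rw [Measure.map_apply hX (IsClosed.measurableSet hF)]
      exact hXF hF
    · simp [measure_univ]
  refine ⟨hmap, ?_⟩
  rw [IndepFun_iff_Indep]
  have hpi1 : IsPiSystem ((fun F => X ⁻¹' F) '' {F : Set ℝ | IsClosed F}) := by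
    rintro _ ⟨F1, hF1, rfl⟩ _ ⟨F2, hF2, rfl⟩ _
    exact ⟨F1 ∩ F2, hF1.inter hF2, by simp [Set.preimage_inter]⟩
  have hpi2 : IsPiSystem
      ((fun G => Y ⁻¹' G) '' {G : Set (EuclideanSpace ℝ (Fin d)) | IsClosed G}) := by
    rintro _ ⟨G1, hG1, rfl⟩ _ ⟨G2, hG2, rfl⟩ _
    exact ⟨G1 ∩ G2, hG1.inter hG2, by simp [Set.preimage_inter]⟩
  refine ProbabilityTheory.IndepSets.indep hX.comap_le hY.comap_le hpi1 hpi2 ?_ ?_ ?_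
  · rw [BorelSpace.measurable_eq (α := ℝ), borel_eq_generateFrom_isClosed,
      MeasurableSpace.comap_generateFrom]
  · rw [BorelSpace.measurable_eq (α := EuclideanSpace ℝ (Fin d)),
      borel_eq_generateFrom_isClosed, MeasurableSpace.comap_generateFrom]
  · rw [ProbabilityTheory.IndepSets_iff]
    rintro _ _ ⟨F, hF, rfl⟩ ⟨G, hG, rfl⟩
    have h := rect_identity hσ hX hY hstein hF hG
    rw [← hXF hF] at h
    refine (ENNReal.toReal_eq_toReal_iff' (measure_ne_top _ _) ?_).1 ?_
    · exact ENNReal.mul_ne_top (measure_ne_top _ _) (measure_ne_top _ _)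
    · rw [ENNReal.toReal_mul]
      exact h
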